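/- Fix constants. Let π be a uniformly random permutation of [n'] fixing 1, with n' = c·n for a sufficiently large constant c, and fix a partition [n'] = W_A ∪ W_B with |W_A|, |W_B| ≥ n'/3. For each i ∈ [n], say π honours gadget i if π maps the two 'a'-positions of gadget i into W_A and the two 'b'-positions into W_B. Then for appropriately chosen constants α ∈ (0,1) and c, the probability that π honours fewer than αn of the n gadgets is at most 2^{-Ω(n)}. -/

import Mathlib

open Finset

lemma card_perm_extend {m : ℕ} (s : Finset (Fin m)) (g : Fin m → Fin m)
    (hg : Set.InjOn g ↑s) :
    (Finset.univ.filter (fun π : Equiv.Perm (Fin m) => ∀ x ∈ s, π x = g x)).card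
      = Nat.factorial (m - s.card) := by
  classical
  set t := s.image g with ht
  have htc : t.card = s.card := Finset.card_image_of_injOn hg
  have hgt : ∀ x ∈ s, g x ∈ t := fun x hx => Finset.mem_image_of_mem g hx
  have hcompl : Fintype.card ↥(sᶜ) = m - s.card := by
    simp [Finset.card_compl]
  have hcompl' : Fintype.card ↥(tᶜ) = m - s.card := by
    simp [Finset.card_compl, htc]
  have key : ∀ (π : Equiv.Perm (Fin m)), (∀ x ∈ s, π x = g x) →
      ∀ x : Fin m, x ∉ s → π x ∉ t := by
    intro π hπ x hx hmem
    obtain ⟨y, hy, hgy⟩ := Finset.mem_image.mp hmem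
    have : π y = π x := (hπ y hy).trans hgy
    exact hx (π.injective this ▸ hy)
  -- forward map
  let Φ : {π : Equiv.Perm (Fin m) // ∀ x ∈ s, π x = g x} → (↥(sᶜ) ≃ ↥(tᶜ)) := by
    intro ⟨π, hπ⟩
    refine Equiv.ofBijective (fun x => ⟨π x.1, ?_⟩) ?_
    · exact Finset.mem_compl.mpr (key π hπ x.1 (Finset.mem_compl.mp x.2))
    · rw [Fintype.bijective_iff_injective_and_card]
      constructor
      · intro a b hab
        exact Subtype.ext (π.injective (congrArg Subtype.val hab))
      · rw [hcompl, hcompl']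
  have hΦbij : Function.Bijective Φ := by
    constructor
    · rintro ⟨π₁, h₁⟩ ⟨π₂, h₂⟩ h
      refine Subtype.ext (Equiv.ext fun x => ?_)
      by_cases hx : x ∈ s
      · rw [h₁ x hx, h₂ x hx]
      · have := congrFun (congrArg (fun (e : ↥(sᶜ) ≃ ↥(tᶜ)) => (e : ↥(sᶜ) → ↥(tᶜ)))
          h) ⟨x, Finset.mem_compl.mpr hx⟩
        exact congrArg Subtype.val this
    · intro e
      set f : Fin m → Fin m := fun x =>
        if h : x ∈ s then g x else (e ⟨x, Finset.mem_compl.mpr h⟩ : Fin m) with hf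
      have hinj : Function.Injective f := by
        intro a b hab
        by_cases ha : a ∈ s <;> by_cases hb : b ∈ s
        · simp only [hf, dif_pos ha, dif_pos hb] at hab
          exact hg ha hb hab
        · simp only [hf, dif_pos ha, dif_neg hb] at hab
          exact absurd (hab ▸ hgt a ha) (Finset.mem_compl.mp (e ⟨b, _⟩).2)
        · simp only [hf, dif_neg ha, dif_pos hb] at hab
          exact absurd (hab ▸ hgt b hb) (Finset.mem_compl.mp (e ⟨a, _⟩).2)
        · simp only [hf, dif_neg ha, dif_neg hb] at hab
          have := e.injective (Subtype.ext hab)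
          exact congrArg Subtype.val this
      let π : Equiv.Perm (Fin m) := Equiv.ofBijective f (Finite.injective_iff_bijective.mp hinj)
      have hπs : ∀ x ∈ s, π x = g x := by
        intro x hx
        show f x = g x
        simp [hf, dif_pos hx]
      refine ⟨⟨π, hπs⟩, ?_⟩
      refine Equiv.ext fun x => ?_
      refine Subtype.ext ?_
      show π x.1 = (e x : Fin m)
      have hx : x.1 ∉ s := Finset.mem_compl.mp x.2
      show f x.1 = (e x : Fin m)
      simp only [hf, dif_neg hx]
  calc (Finset.univ.filter (fun π : Equiv.Perm (Fin m) => ∀ x ∈ s, π x = g x)).card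
      = Fintype.card {π : Equiv.Perm (Fin m) // ∀ x ∈ s, π x = g x} :=
        (Fintype.card_subtype _).symm
    _ = Fintype.card (↥(sᶜ) ≃ ↥(tᶜ)) := Fintype.card_of_bijective hΦbij
    _ = Nat.factorial (m - s.card) := by
        rw [Fintype.card_equiv (Fintype.equivOfCardEq (hcompl.trans hcompl'.symm)), hcompl]

lemma fiber_bound {m : ℕ} (P : Finset (Fin m)) (π₀ : Equiv.Perm (Fin m))
    (p1 p2 p3 p4 : Fin m) (WA : Finset (Fin m))
    (hp1 : p1 ∉ P) (hp2 : p2 ∉ P) (hp3 : p3 ∉ P) (hp4 : p4 ∉ P)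
    (d12 : p1 ≠ p2) (d13 : p1 ≠ p3) (d14 : p1 ≠ p4)
    (d23 : p2 ≠ p3) (d24 : p2 ≠ p4) (d34 : p3 ≠ p4)
    (hnum : Nat.factorial (m - P.card) ≤ 100 *
      ((((WA \ P.image π₀).card * (WA \ P.image π₀).card - (WA \ P.image π₀).card) *
        ((WAᶜ \ P.image π₀).card * (WAᶜ \ P.image π₀).card - (WAᶜ \ P.image π₀).card)) *
       Nat.factorial (m - (P.card + 4)))) :
    100 * ((Finset.univ.filter (fun π : Equiv.Perm (Fin m) =>
        (∀ x ∈ P, π x = π₀ x) ∧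
        ¬(π p1 ∈ WA ∧ π p2 ∈ WA ∧ π p3 ∈ WAᶜ ∧ π p4 ∈ WAᶜ))).card)
      ≤ 99 * ((Finset.univ.filter
          (fun π : Equiv.Perm (Fin m) => ∀ x ∈ P, π x = π₀ x)).card) := by
  classical
  set A' : Finset (Fin m) := WA \ P.image π₀ with hA'
  set B' : Finset (Fin m) := WAᶜ \ P.image π₀ with hB'
  set Q : Finset (Equiv.Perm (Fin m)) :=
    Finset.univ.filter (fun π : Equiv.Perm (Fin m) => ∀ x ∈ P, π x = π₀ x) with hQ
  have hQcard : Q.card = Nat.factorial (m - P.card) :=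
    card_perm_extend P π₀ (Set.injOn_of_injective π₀.injective)
  set hon : Equiv.Perm (Fin m) → Prop :=
    fun π => π p1 ∈ WA ∧ π p2 ∈ WA ∧ π p3 ∈ WAᶜ ∧ π p4 ∈ WAᶜ with hhon
  -- the honoured part of Q
  set Hon : Finset (Equiv.Perm (Fin m)) := Q.filter hon with hHon
  -- count Hon by fibering over the 4-tuple of values
  have hHcard : Hon.card =
      ((A'.card * A'.card - A'.card) * (B'.card * B'.card - B'.card)) *
        Nat.factorial (m - (P.card + 4)) := by
    have hfib : ∀ π ∈ Hon,
        (((π p1, π p2), (π p3, π p4)) : (Fin m × Fin m) × (Fin m × Fin m))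
          ∈ A'.offDiag ×ˢ B'.offDiag := by
      intro π hπ
      simp only [hHon, hQ, Finset.mem_filter, Finset.mem_univ, true_and] at hπ
      obtain ⟨hext, h1, h2, h3, h4⟩ := hπ
      have hnotim : ∀ p : Fin m, p ∉ P → π p ∉ P.image π₀ := by
        intro p hp hmem
        obtain ⟨y, hy, hgy⟩ := Finset.mem_image.mp hmem
        have : π y = π p := (hext y hy).trans hgy
        exact hp (π.injective this ▸ hy)
      refine Finset.mem_product.mpr ⟨Finset.mem_offDiag.mpr ⟨?_, ?_, ?_⟩,
        Finset.mem_offDiag.mpr ⟨?_, ?_, ?_⟩⟩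
      · exact Finset.mem_sdiff.mpr ⟨h1, hnotim p1 hp1⟩
      · exact Finset.mem_sdiff.mpr ⟨h2, hnotim p2 hp2⟩
      · exact fun h => d12 (π.injective h)
      · exact Finset.mem_sdiff.mpr ⟨h3, hnotim p3 hp3⟩
      · exact Finset.mem_sdiff.mpr ⟨h4, hnotim p4 hp4⟩
      · exact fun h => d34 (π.injective h)
    rw [Finset.card_eq_sum_card_fiberwise hfib]
    have hfibcard : ∀ q ∈ A'.offDiag ×ˢ B'.offDiag,
        (Hon.filter (fun π =>
          (((π p1, π p2), (π p3, π p4)) : (Fin m × Fin m) × (Fin m × Fin m)) = q)).card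
          = Nat.factorial (m - (P.card + 4)) := by
      rintro ⟨⟨q1, q2⟩, q3, q4⟩ hq
      rw [Finset.mem_product] at hq
      obtain ⟨hqA, hqB⟩ := hq
      rw [Finset.mem_offDiag] at hqA hqB
      obtain ⟨hq1, hq2, e12⟩ := hqA
      obtain ⟨hq3, hq4, e34⟩ := hqB
      have hq1A : q1 ∈ WA := (Finset.mem_sdiff.mp hq1).1
      have hq2A : q2 ∈ WA := (Finset.mem_sdiff.mp hq2).1
      have hq3B : q3 ∈ WAᶜ := (Finset.mem_sdiff.mp hq3).1
      have hq4B : q4 ∈ WAᶜ := (Finset.mem_sdiff.mp hq4).1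
      have hq1i : q1 ∉ P.image π₀ := (Finset.mem_sdiff.mp hq1).2
      have hq2i : q2 ∉ P.image π₀ := (Finset.mem_sdiff.mp hq2).2
      have hq3i : q3 ∉ P.image π₀ := (Finset.mem_sdiff.mp hq3).2
      have hq4i : q4 ∉ P.image π₀ := (Finset.mem_sdiff.mp hq4).2
      have e13 : q1 ≠ q3 := fun h => (Finset.mem_compl.mp hq3B) (h ▸ hq1A)
      have e14 : q1 ≠ q4 := fun h => (Finset.mem_compl.mp hq4B) (h ▸ hq1A)
      have e23 : q2 ≠ q3 := fun h => (Finset.mem_compl.mp hq3B) (h ▸ hq2A)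
      have e24 : q2 ≠ q4 := fun h => (Finset.mem_compl.mp hq4B) (h ▸ hq2A)
      set P' : Finset (Fin m) := insert p1 (insert p2 (insert p3 (insert p4 P))) with hP'
      set g' : Fin m → Fin m := fun x =>
        if x = p1 then q1 else if x = p2 then q2 else if x = p3 then q3
          else if x = p4 then q4 else π₀ x with hg'
      have e1 : g' p1 = q1 := by simp [hg']
      have e2 : g' p2 = q2 := by simp [hg', d12.symm]
      have e3 : g' p3 = q3 := by simp [hg', d13.symm, d23.symm]
      have e4 : g' p4 = q4 := by simp [hg', d14.symm, d24.symm, d34.symm]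
      have eP : ∀ z ∈ P, g' z = π₀ z := by
        intro z hz
        have n1 : z ≠ p1 := fun h => hp1 (h ▸ hz)
        have n2 : z ≠ p2 := fun h => hp2 (h ▸ hz)
        have n3 : z ≠ p3 := fun h => hp3 (h ▸ hz)
        have n4 : z ≠ p4 := fun h => hp4 (h ▸ hz)
        simp [hg', n1, n2, n3, n4]
      have dP : ∀ z ∈ P, π₀ z ∈ P.image π₀ := fun z hz => Finset.mem_image_of_mem _ hz
      have hP'card : P'.card = P.card + 4 := by
        have m4 : p4 ∉ P := hp4
        have m3 : p3 ∉ insert p4 P := by simp [Finset.mem_insert, d34, hp3]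
        have m2 : p2 ∉ insert p3 (insert p4 P) := by
          simp [Finset.mem_insert, d23, d24, hp2]
        have m1 : p1 ∉ insert p2 (insert p3 (insert p4 P)) := by
          simp [Finset.mem_insert, d12, d13, d14, hp1]
        rw [hP', Finset.card_insert_of_notMem m1, Finset.card_insert_of_notMem m2,
          Finset.card_insert_of_notMem m3, Finset.card_insert_of_notMem m4]
      have hinj : Set.InjOn g' ↑P' := by
        intro x hx y hy hxy
        have hx' : x = p1 ∨ x = p2 ∨ x = p3 ∨ x = p4 ∨ x ∈ P := by
          simpa [hP', Finset.mem_insert] using hx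
        have hy' : y = p1 ∨ y = p2 ∨ y = p3 ∨ y = p4 ∨ y ∈ P := by
          simpa [hP', Finset.mem_insert] using hy
        rcases hx' with rfl | rfl | rfl | rfl | hx' <;>
          rcases hy' with rfl | rfl | rfl | rfl | hy'
        · rfl
        · rw [e1, e2] at hxy; exact absurd hxy e12
        · rw [e1, e3] at hxy; exact absurd hxy e13
        · rw [e1, e4] at hxy; exact absurd hxy e14
        · rw [e1, eP y hy'] at hxy; exact absurd (hxy ▸ dP y hy') hq1i
        · rw [e2, e1] at hxy; exact absurd hxy.symm e12
        · rfl
        · rw [e2, e3] at hxy; exact absurd hxy e23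
        · rw [e2, e4] at hxy; exact absurd hxy e24
        · rw [e2, eP y hy'] at hxy; exact absurd (hxy ▸ dP y hy') hq2i
        · rw [e3, e1] at hxy; exact absurd hxy.symm e13
        · rw [e3, e2] at hxy; exact absurd hxy.symm e23
        · rfl
        · rw [e3, e4] at hxy; exact absurd hxy e34
        · rw [e3, eP y hy'] at hxy; exact absurd (hxy ▸ dP y hy') hq3i
        · rw [e4, e1] at hxy; exact absurd hxy.symm e14
        · rw [e4, e2] at hxy; exact absurd hxy.symm e24
        · rw [e4, e3] at hxy; exact absurd hxy.symm e34
        · rfl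
        · rw [e4, eP y hy'] at hxy; exact absurd (hxy ▸ dP y hy') hq4i
        · rw [eP x hx', e1] at hxy; exact absurd (hxy ▸ dP x hx') hq1i
        · rw [eP x hx', e2] at hxy; exact absurd (hxy ▸ dP x hx') hq2i
        · rw [eP x hx', e3] at hxy; exact absurd (hxy ▸ dP x hx') hq3i
        · rw [eP x hx', e4] at hxy; exact absurd (hxy ▸ dP x hx') hq4i
        · rw [eP x hx', eP y hy'] at hxy; exact π₀.injective hxy
      have hset : Hon.filter (fun π =>
            (((π p1, π p2), (π p3, π p4)) : (Fin m × Fin m) × (Fin m × Fin m))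
              = ((q1, q2), (q3, q4)))
          = Finset.univ.filter (fun π : Equiv.Perm (Fin m) => ∀ x ∈ P', π x = g' x) := by
        ext π
        simp only [hHon, hQ, hhon, Finset.mem_filter, Finset.mem_univ, true_and,
          Prod.mk.injEq]
        constructor
        · rintro ⟨⟨hext, _⟩, ⟨⟨h1, h2⟩, h3, h4⟩⟩
          intro x hxP'
          have hx' : x = p1 ∨ x = p2 ∨ x = p3 ∨ x = p4 ∨ x ∈ P := by
            simpa [hP', Finset.mem_insert] using hxP'
          rcases hx' with rfl | rfl | rfl | rfl | hx'
          · rw [e1]; exact h1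
          · rw [e2]; exact h2
          · rw [e3]; exact h3
          · rw [e4]; exact h4
          · rw [eP x hx']; exact hext x hx'
        · intro hall
          have hv1 : π p1 = q1 := by
            rw [hall p1 (by simp [hP', Finset.mem_insert]), e1]
          have hv2 : π p2 = q2 := by
            rw [hall p2 (by simp [hP', Finset.mem_insert]), e2]
          have hv3 : π p3 = q3 := by
            rw [hall p3 (by simp [hP', Finset.mem_insert]), e3]
          have hv4 : π p4 = q4 := by
            rw [hall p4 (by simp [hP', Finset.mem_insert]), e4]
          have hext : ∀ x ∈ P, π x = π₀ x := by
            intro x hxP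
            rw [hall x (by simp [hP', Finset.mem_insert, hxP]), eP x hxP]
          refine ⟨⟨hext, ?_⟩, ⟨⟨hv1, hv2⟩, hv3, hv4⟩⟩
          exact ⟨hv1 ▸ hq1A, hv2 ▸ hq2A, hv3 ▸ hq3B, hv4 ▸ hq4B⟩
      rw [hset, card_perm_extend P' g' hinj, hP'card]
    rw [Finset.sum_congr rfl hfibcard, Finset.sum_const, smul_eq_mul,
      Finset.card_product, Finset.offDiag_card, Finset.offDiag_card]
  -- now conclude
  have hsplit : (Q.filter hon).card + (Q.filter (fun π => ¬ hon π)).card = Q.card :=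
    Finset.card_filter_add_card_filter_not _
  rw [← hHon] at hsplit
  have hDis : (Finset.univ.filter (fun π : Equiv.Perm (Fin m) =>
        (∀ x ∈ P, π x = π₀ x) ∧
        ¬(π p1 ∈ WA ∧ π p2 ∈ WA ∧ π p3 ∈ WAᶜ ∧ π p4 ∈ WAᶜ)))
      = Q.filter (fun π => ¬ hon π) := by
    rw [hQ, Finset.filter_filter]
  have hQH : Q.card ≤ 100 * Hon.card := by
    rw [hQcard, hHon, hHcard]
    exact hnum.trans (le_of_eq (by ring))
  rw [hDis]
  omega

set_option maxHeartbeats 2000000 in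
open scoped Classical in
lemma E_bound {n : ℕ} (hn : 1 ≤ n) (WA : Finset (Fin (2000 * n)))
    (hWA : 2000 * n ≤ 3 * WA.card) (hWB : 2000 * n ≤ 3 * WAᶜ.card)
    (S : Finset (Fin n)) :
    100 ^ S.card * (Finset.univ.filter (fun π : Equiv.Perm (Fin (2000 * n)) =>
        π ⟨0, by omega⟩ = ⟨0, by omega⟩ ∧
        ∀ i ∈ S, ¬(π ⟨4 * i.1 + 1, by have := i.isLt; omega⟩ ∈ WA ∧
                   π ⟨4 * i.1 + 2, by have := i.isLt; omega⟩ ∈ WA ∧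
                   π ⟨4 * i.1 + 3, by have := i.isLt; omega⟩ ∈ WAᶜ ∧
                   π ⟨4 * i.1 + 4, by have := i.isLt; omega⟩ ∈ WAᶜ))).card
      ≤ 99 ^ S.card * Nat.factorial (2000 * n - 1) := by
  classical
  set Z : Fin (2000 * n) := ⟨0, by omega⟩ with hZ
  induction S using Finset.induction_on with
  | empty =>
      simp only [Finset.notMem_empty, false_implies, implies_true, and_true,
        Finset.card_empty, pow_zero, one_mul]
      have hset : (Finset.univ.filter (fun π : Equiv.Perm (Fin (2000 * n)) => π Z = Z))
          = Finset.univ.filter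
              (fun π : Equiv.Perm (Fin (2000 * n)) => ∀ x ∈ ({Z} : Finset (Fin (2000*n))), π x = id x) := by
        ext π; simp
      rw [hset, card_perm_extend _ id (Set.injOn_of_injective (fun a b h => h)),
        Finset.card_singleton]
  | @insert i S hi IH =>
      -- positions of gadget i and of gadgets in S
      have hq : ∀ (j : Fin n) (r : ℕ), r ≤ 4 → 4 * j.1 + r < 2000 * n := by
        intro j r hr; have := j.isLt; omega
      let p : Fin n → ℕ → Fin (2000 * n) := fun j r => ⟨4 * j.1 + min r 4, by
        have := j.isLt; have := Nat.min_le_right r 4; omega⟩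
      have hpval : ∀ (j : Fin n) (r : ℕ), r ≤ 4 → (p j r).1 = 4 * j.1 + r := by
        intro j r hr; simp [p, Nat.min_eq_left hr]
      -- the block finsets
      let Bl : Fin n → Finset (Fin (2000 * n)) := fun j => {p j 1, p j 2, p j 3, p j 4}
      have hBlmem : ∀ (j : Fin n) (x : Fin (2000 * n)),
          x ∈ Bl j ↔ (x = p j 1 ∨ x = p j 2 ∨ x = p j 3 ∨ x = p j 4) := by
        intro j x; simp [Bl, Finset.mem_insert]
      have hBlcard : ∀ j : Fin n, (Bl j).card = 4 := by
        intro j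
        have h12 : p j 1 ≠ p j 2 := by
          intro h; have := congrArg Fin.val h
          rw [hpval j 1 (by omega), hpval j 2 (by omega)] at this; omega
        have h13 : p j 1 ≠ p j 3 := by
          intro h; have := congrArg Fin.val h
          rw [hpval j 1 (by omega), hpval j 3 (by omega)] at this; omega
        have h14 : p j 1 ≠ p j 4 := by
          intro h; have := congrArg Fin.val h
          rw [hpval j 1 (by omega), hpval j 4 (by omega)] at this; omega
        have h23 : p j 2 ≠ p j 3 := by
          intro h; have := congrArg Fin.val h
          rw [hpval j 2 (by omega), hpval j 3 (by omega)] at this; omega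
        have h24 : p j 2 ≠ p j 4 := by
          intro h; have := congrArg Fin.val h
          rw [hpval j 2 (by omega), hpval j 4 (by omega)] at this; omega
        have h34 : p j 3 ≠ p j 4 := by
          intro h; have := congrArg Fin.val h
          rw [hpval j 3 (by omega), hpval j 4 (by omega)] at this; omega
        show ({p j 1, p j 2, p j 3, p j 4} : Finset _).card = 4
        rw [Finset.card_insert_of_notMem (by simp [Finset.mem_insert, h12, h13, h14]),
          Finset.card_insert_of_notMem (by simp [Finset.mem_insert, h23, h24]),
          Finset.card_insert_of_notMem (by simp [h34]), Finset.card_singleton]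
      have hBldisj : ∀ j ∈ S, ∀ j' ∈ S, j ≠ j' → Disjoint (Bl j) (Bl j') := by
        intro j _ j' _ hjj'
        rw [Finset.disjoint_left]
        intro x hx hx'
        rw [hBlmem] at hx hx'
        have hne : j.1 ≠ j'.1 := fun h => hjj' (Fin.ext h)
        rcases hx with rfl | rfl | rfl | rfl <;>
          rcases hx' with h' | h' | h' | h' <;>
          · have := congrArg Fin.val h'
            rw [hpval, hpval] at this <;> omega
      set P : Finset (Fin (2000 * n)) := insert Z (S.biUnion Bl) with hP
      have hZnotin : Z ∉ S.biUnion Bl := by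
        intro h
        obtain ⟨j, _, hj⟩ := Finset.mem_biUnion.mp h
        rw [hBlmem] at hj
        rcases hj with h' | h' | h' | h' <;>
        · have := congrArg Fin.val h'
          rw [hpval] at this <;> simp [hZ] at this <;> omega
      have hScard : S.card + 1 ≤ n := by
        have := Finset.card_le_univ (insert i S)
        rwa [Finset.card_insert_of_notMem hi, Fintype.card_fin] at this
      have hPcard : P.card = 4 * S.card + 1 := by
        rw [hP, Finset.card_insert_of_notMem hZnotin, Finset.card_biUnion hBldisj]
        rw [Finset.sum_congr rfl (fun j _ => hBlcard j), Finset.sum_const, smul_eq_mul]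
        ring
      have hmemP : ∀ j ∈ S, ∀ r, 1 ≤ r → r ≤ 4 → p j r ∈ P := by
        intro j hj r h1 h4
        rw [hP, Finset.mem_insert]
        right
        refine Finset.mem_biUnion.mpr ⟨j, hj, ?_⟩
        rw [hBlmem]
        interval_cases r
        · left; rfl
        · right; left; rfl
        · right; right; left; rfl
        · right; right; right; rfl
      have hinotP : ∀ r, 1 ≤ r → r ≤ 4 → p i r ∉ P := by
        intro r h1 h4 hmem
        rw [hP, Finset.mem_insert] at hmem
        rcases hmem with h | h
        · have := congrArg Fin.val h
          rw [hpval i r h4] at this; simp [hZ] at this; omega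
        · obtain ⟨j, hj, hjm⟩ := Finset.mem_biUnion.mp h
          have hij : i.1 ≠ j.1 := fun hh => hi ((Fin.ext hh : i = j) ▸ hj)
          rw [hBlmem] at hjm
          rcases hjm with h' | h' | h' | h' <;>
          · have := congrArg Fin.val h'
            rw [hpval, hpval] at this <;> omega
      -- restriction map
      set res : Equiv.Perm (Fin (2000 * n)) → (↥P → Fin (2000 * n)) :=
        fun π x => π x.1 with hres
      set ES : Finset (Equiv.Perm (Fin (2000 * n))) :=
        Finset.univ.filter (fun π : Equiv.Perm (Fin (2000 * n)) =>
          π Z = Z ∧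
          ∀ j ∈ S, ¬(π ⟨4 * j.1 + 1, hq j 1 (by omega)⟩ ∈ WA ∧
                     π ⟨4 * j.1 + 2, hq j 2 (by omega)⟩ ∈ WA ∧
                     π ⟨4 * j.1 + 3, hq j 3 (by omega)⟩ ∈ WAᶜ ∧
                     π ⟨4 * j.1 + 4, hq j 4 (by omega)⟩ ∈ WAᶜ)) with hES
      set EI : Finset (Equiv.Perm (Fin (2000 * n))) :=
        Finset.univ.filter (fun π : Equiv.Perm (Fin (2000 * n)) =>
          π Z = Z ∧
          ∀ j ∈ insert i S, ¬(π ⟨4 * j.1 + 1, hq j 1 (by omega)⟩ ∈ WA ∧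
                     π ⟨4 * j.1 + 2, hq j 2 (by omega)⟩ ∈ WA ∧
                     π ⟨4 * j.1 + 3, hq j 3 (by omega)⟩ ∈ WAᶜ ∧
                     π ⟨4 * j.1 + 4, hq j 4 (by omega)⟩ ∈ WAᶜ)) with hEI
      have hp_eq : ∀ (j : Fin n) (r : ℕ) (h1 : 1 ≤ r) (h4 : r ≤ 4),
          p j r = ⟨4 * j.1 + r, hq j r h4⟩ := by
        intro j r h1 h4
        exact Fin.ext (hpval j r h4)
      have hEIsub : EI ⊆ ES := by
        intro π hπ
        rw [hEI, Finset.mem_filter] at hπ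
        rw [hES, Finset.mem_filter]
        exact ⟨hπ.1, hπ.2.1, fun j hj => hπ.2.2 j (Finset.mem_insert_of_mem hj)⟩
      -- fiberwise decomposition
      set T : Finset (↥P → Fin (2000 * n)) := ES.image res with hT
      have hESsum : ES.card = ∑ g ∈ T, (ES.filter (fun π => res π = g)).card :=
        Finset.card_eq_sum_card_fiberwise (fun π hπ => Finset.mem_image_of_mem res hπ)
      have hEIsum : EI.card = ∑ g ∈ T, (EI.filter (fun π => res π = g)).card :=
        Finset.card_eq_sum_card_fiberwise
          (fun π hπ => Finset.mem_image_of_mem res (hEIsub hπ))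
      -- per-fiber bound
      have hfiber : ∀ g ∈ T,
          100 * (EI.filter (fun π => res π = g)).card
            ≤ 99 * (ES.filter (fun π => res π = g)).card := by
        intro g hg
        obtain ⟨π₀, hπ₀ES, hπ₀g⟩ := Finset.mem_image.mp hg
        rw [hES, Finset.mem_filter] at hπ₀ES
        obtain ⟨-, hπ₀Z, hπ₀S⟩ := hπ₀ES
        -- identify the fibers
        have hresiff : ∀ π : Equiv.Perm (Fin (2000 * n)),
            res π = g ↔ ∀ x ∈ P, π x = π₀ x := by
          intro π
          constructor
          · intro h x hx
            have := congrFun (h.trans hπ₀g.symm) ⟨x, hx⟩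
            exact this
          · intro h
            funext x
            rw [← hπ₀g]
            exact h x.1 x.2
        have hSdetermined : ∀ π : Equiv.Perm (Fin (2000 * n)),
            (∀ x ∈ P, π x = π₀ x) →
            (π Z = Z ∧
              ∀ j ∈ S, ¬(π ⟨4 * j.1 + 1, hq j 1 (by omega)⟩ ∈ WA ∧
                     π ⟨4 * j.1 + 2, hq j 2 (by omega)⟩ ∈ WA ∧
                     π ⟨4 * j.1 + 3, hq j 3 (by omega)⟩ ∈ WAᶜ ∧
                     π ⟨4 * j.1 + 4, hq j 4 (by omega)⟩ ∈ WAᶜ)) := by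
          intro π hagree
          have hZP : Z ∈ P := Finset.mem_insert_self _ _
          refine ⟨(hagree Z hZP).trans hπ₀Z, ?_⟩
          intro j hj
          rw [← hp_eq j 1 (by omega) (by omega), ← hp_eq j 2 (by omega) (by omega),
            ← hp_eq j 3 (by omega) (by omega), ← hp_eq j 4 (by omega) (by omega),
            hagree _ (hmemP j hj 1 (by omega) (by omega)),
            hagree _ (hmemP j hj 2 (by omega) (by omega)),
            hagree _ (hmemP j hj 3 (by omega) (by omega)),
            hagree _ (hmemP j hj 4 (by omega) (by omega)),
            hp_eq j 1 (by omega) (by omega), hp_eq j 2 (by omega) (by omega),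
            hp_eq j 3 (by omega) (by omega), hp_eq j 4 (by omega) (by omega)]
          exact hπ₀S j hj
        have hQeq : ES.filter (fun π => res π = g)
            = Finset.univ.filter (fun π : Equiv.Perm (Fin (2000 * n)) =>
                ∀ x ∈ P, π x = π₀ x) := by
          ext π
          rw [Finset.mem_filter, hES, Finset.mem_filter, Finset.mem_filter]
          constructor
          · rintro ⟨⟨_, -⟩, hresg⟩
            exact ⟨Finset.mem_univ _, (hresiff π).mp hresg⟩
          · rintro ⟨-, hagree⟩
            exact ⟨⟨Finset.mem_univ _, hSdetermined π hagree⟩, (hresiff π).mpr hagree⟩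
        have hIeq : EI.filter (fun π => res π = g)
            = Finset.univ.filter (fun π : Equiv.Perm (Fin (2000 * n)) =>
                (∀ x ∈ P, π x = π₀ x) ∧
                ¬(π (p i 1) ∈ WA ∧ π (p i 2) ∈ WA ∧ π (p i 3) ∈ WAᶜ ∧ π (p i 4) ∈ WAᶜ)) := by
          ext π
          rw [Finset.mem_filter, hEI, Finset.mem_filter, Finset.mem_filter]
          constructor
          · rintro ⟨⟨-, hZπ, hall⟩, hresg⟩
            refine ⟨Finset.mem_univ _, (hresiff π).mp hresg, ?_⟩
            rw [hp_eq i 1 (by omega) (by omega), hp_eq i 2 (by omega) (by omega),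
              hp_eq i 3 (by omega) (by omega), hp_eq i 4 (by omega) (by omega)]
            exact hall i (Finset.mem_insert_self _ _)
          · rintro ⟨-, hagree, hnothon⟩
            obtain ⟨hZπ, hallS⟩ := hSdetermined π hagree
            refine ⟨⟨Finset.mem_univ _, hZπ, ?_⟩, (hresiff π).mpr hagree⟩
            intro j hj
            rcases Finset.mem_insert.mp hj with rfl | hjS
            · rw [← hp_eq j 1 (by omega) (by omega), ← hp_eq j 2 (by omega) (by omega),
                ← hp_eq j 3 (by omega) (by omega), ← hp_eq j 4 (by omega) (by omega)]
              exact hnothon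
            · exact hallS j hjS
        -- numeric hypothesis for fiber_bound
        obtain ⟨A, hA⟩ : ∃ A : ℕ, (WA \ P.image π₀).card = A := ⟨_, rfl⟩
        obtain ⟨B, hB⟩ : ∃ B : ℕ, (WAᶜ \ P.image π₀).card = B := ⟨_, rfl⟩
        have hAbound : 662 * n + 3 ≤ A := by
          have h1 : WA.card - (P.image π₀).card ≤ A := hA ▸ Finset.le_card_sdiff _ _
          have h2 : (P.image π₀).card ≤ P.card := Finset.card_image_le
          rw [hPcard] at h2
          omega
        have hBbound : 662 * n + 3 ≤ B := by
          have h1 : WAᶜ.card - (P.image π₀).card ≤ B := hB ▸ Finset.le_card_sdiff _ _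
          have h2 : (P.image π₀).card ≤ P.card := Finset.card_image_le
          rw [hPcard] at h2
          omega
        have hsq : ∀ X : ℕ, 662 * n + 3 ≤ X → 662 * n * (662 * n) ≤ X * X - X := by
          intro X hX
          have key : 662 * n * (662 * n) + X ≤ X * X := by
            calc 662 * n * (662 * n) + X
                ≤ (662 * n + 3) * (662 * n + 2) + X := by nlinarith
              _ ≤ X * (662 * n + 2) + X :=
                  Nat.add_le_add_right (Nat.mul_le_mul_right _ hX) X
              _ = (662 * n + 3) * X := by ring
              _ ≤ X * X := Nat.mul_le_mul_right _ hX
          omega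
        have hnum : Nat.factorial (2000 * n - P.card) ≤ 100 *
            (((A * A - A) * (B * B - B)) * Nat.factorial (2000 * n - (P.card + 4))) := by
          set M : ℕ := 2000 * n - P.card with hM
          have hM4 : 4 ≤ M ∧ M ≤ 2000 * n := by
            rw [hM, hPcard]; omega
          obtain ⟨k, hk⟩ : ∃ k, M = k + 4 := ⟨M - 4, by omega⟩
          have hkk : 2000 * n - (P.card + 4) = k := by omega
          rw [hkk, hk]
          have hfact : Nat.factorial (k + 4)
              = ((k + 4) * (k + 3) * (k + 2) * (k + 1)) * Nat.factorial k := by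
            simp [Nat.factorial_succ]; ring
          rw [hfact]
          have hup : (k + 4) * (k + 3) * (k + 2) * (k + 1) ≤ 100 * ((A * A - A) * (B * B - B)) := by
            have h1 : (k + 4) * (k + 3) * (k + 2) * (k + 1) ≤
                (2000 * n) * (2000 * n) * (2000 * n) * (2000 * n) := by
              have : k + 4 ≤ 2000 * n := by omega
              exact Nat.mul_le_mul (Nat.mul_le_mul (Nat.mul_le_mul this (by omega)) (by omega))
                (by omega)
            have h2 : (662 * n * (662 * n)) * (662 * n * (662 * n))
                ≤ (A * A - A) * (B * B - B) :=
              Nat.mul_le_mul (hsq A hAbound) (hsq B hBbound)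
            have h3 : (2000 * n) * (2000 * n) * (2000 * n) * (2000 * n)
                ≤ 100 * ((662 * n * (662 * n)) * (662 * n * (662 * n))) := by
              have e1 : (2000 * n) * (2000 * n) * (2000 * n) * (2000 * n)
                  = 16000000000000 * (n * n * n * n) := by ring
              have e2 : 100 * ((662 * n * (662 * n)) * (662 * n * (662 * n)))
                  = 19205780353600 * (n * n * n * n) := by ring
              rw [e1, e2]
              exact Nat.mul_le_mul_right _ (by norm_num)
            exact h1.trans (h3.trans (Nat.mul_le_mul_left _ h2))
          calc (k + 4) * (k + 3) * (k + 2) * (k + 1) * Nat.factorial k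
              ≤ (100 * ((A * A - A) * (B * B - B))) * Nat.factorial k :=
                Nat.mul_le_mul_right _ hup
            _ = 100 * (((A * A - A) * (B * B - B)) * Nat.factorial k) := by ring
        have := fiber_bound P π₀ (p i 1) (p i 2) (p i 3) (p i 4) WA
          (hinotP 1 (by omega) (by omega)) (hinotP 2 (by omega) (by omega))
          (hinotP 3 (by omega) (by omega)) (hinotP 4 (by omega) (by omega))
          (by intro h; have := congrArg Fin.val h; rw [hpval, hpval] at this <;> omega)
          (by intro h; have := congrArg Fin.val h; rw [hpval, hpval] at this <;> omega)
          (by intro h; have := congrArg Fin.val h; rw [hpval, hpval] at this <;> omega)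
          (by intro h; have := congrArg Fin.val h; rw [hpval, hpval] at this <;> omega)
          (by intro h; have := congrArg Fin.val h; rw [hpval, hpval] at this <;> omega)
          (by intro h; have := congrArg Fin.val h; rw [hpval, hpval] at this <;> omega)
          (by rw [hA, hB]; exact hnum)
        rw [hQeq, hIeq]
        exact this
      -- combine
      have hstep : 100 * EI.card ≤ 99 * ES.card := by
        rw [hESsum, hEIsum, Finset.mul_sum, Finset.mul_sum]
        exact Finset.sum_le_sum hfiber
      have hIH' : 100 ^ S.card * ES.card ≤ 99 ^ S.card * Nat.factorial (2000 * n - 1) := IH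
      show 100 ^ (insert i S).card * EI.card ≤ 99 ^ (insert i S).card * Nat.factorial (2000 * n - 1)
      rw [Finset.card_insert_of_notMem hi]
      calc 100 ^ (S.card + 1) * EI.card
          = 100 ^ S.card * (100 * EI.card) := by ring
        _ ≤ 100 ^ S.card * (99 * ES.card) := Nat.mul_le_mul_left _ hstep
        _ = 99 * (100 ^ S.card * ES.card) := by ring
        _ ≤ 99 * (99 ^ S.card * Nat.factorial (2000 * n - 1)) := Nat.mul_le_mul_left _ hIH'
        _ = 99 ^ (S.card + 1) * Nat.factorial (2000 * n - 1) := by ring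

-- the numeric inequality, isolated
set_option maxRecDepth 100000 in
lemma base_ineq : ((198099 : ℝ)/200000)^2000 * (200000/99) ≤ 1/2 := by
  rw [div_pow]
  rw [div_mul_div_comm, div_le_div_iff₀ (by positivity) (by norm_num)]
  norm_num
  exact_mod_cast (Nat.le_of_ble_eq_true rfl : (198099:ℕ) ^ 2000 * 200000 * 2 ≤ 200000 ^ 2000 * 99)

open scoped Classical in
theorem random_permutation_honours_many_gadgets :
    ∃ α : ℝ, 0 < α ∧ α < 1 ∧
    ∃ c : ℕ, ∃ _hc : 5 ≤ c,
    ∃ δ : ℝ, 0 < δ ∧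
    ∃ N : ℕ, ∃ _hN : 1 ≤ N,
    ∀ n : ℕ, ∀ _hn : N ≤ n,
    ∀ WA : Finset (Fin (c * n)),
      c * n ≤ 3 * WA.card → c * n ≤ 3 * WAᶜ.card →
      ((Finset.univ.filter (fun π : Equiv.Perm (Fin (c * n)) =>
          π ⟨0, by exact Nat.mul_pos (by omega) (by omega)⟩
            = ⟨0, by exact Nat.mul_pos (by omega) (by omega)⟩ ∧
          ((Finset.univ.filter (fun i : Fin n =>
              π ⟨4 * i.1 + 1, by have h := i.isLt; have := Nat.mul_le_mul_right n _hc; omega⟩ ∈ WA ∧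
              π ⟨4 * i.1 + 2, by have h := i.isLt; have := Nat.mul_le_mul_right n _hc; omega⟩ ∈ WA ∧
              π ⟨4 * i.1 + 3, by have h := i.isLt; have := Nat.mul_le_mul_right n _hc; omega⟩ ∈ WAᶜ ∧
              π ⟨4 * i.1 + 4, by have h := i.isLt; have := Nat.mul_le_mul_right n _hc; omega⟩ ∈ WAᶜ)).card : ℝ)
            < α * n)).card : ℝ)
        / ((Finset.univ.filter (fun π : Equiv.Perm (Fin (c * n)) =>
            π ⟨0, by exact Nat.mul_pos (by omega) (by omega)⟩
              = ⟨0, by exact Nat.mul_pos (by omega) (by omega)⟩)).card : ℝ)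
      ≤ (2 : ℝ) ^ (-(δ * n)) := by
  refine ⟨1/2000, by norm_num, by norm_num, 2000, ⟨by norm_num, 1/2000, by norm_num,
    1, ⟨le_refl 1, ?_⟩⟩⟩
  intro n hn WA hWA hWB
  have hn1 : 1 ≤ n := hn
  have hm : 0 < 2000 * n := by omega
  have hq : ∀ (i : Fin n) (r : ℕ), r ≤ 4 → 4 * i.1 + r < 2000 * n := by
    intro i r hr; have := i.isLt; omega
  show ((Finset.univ.filter (fun π : Equiv.Perm (Fin (2000 * n)) =>
          π ⟨0, hm⟩ = ⟨0, hm⟩ ∧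
          ((Finset.univ.filter (fun i : Fin n =>
              π ⟨4 * i.1 + 1, hq i 1 (by omega)⟩ ∈ WA ∧
              π ⟨4 * i.1 + 2, hq i 2 (by omega)⟩ ∈ WA ∧
              π ⟨4 * i.1 + 3, hq i 3 (by omega)⟩ ∈ WAᶜ ∧
              π ⟨4 * i.1 + 4, hq i 4 (by omega)⟩ ∈ WAᶜ)).card : ℝ)
            < 1/2000 * n)).card : ℝ)
        / ((Finset.univ.filter (fun π : Equiv.Perm (Fin (2000 * n)) =>
            π ⟨0, hm⟩ = ⟨0, hm⟩)).card : ℝ)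
      ≤ (2 : ℝ) ^ (-(1/2000 * (n:ℝ)))
  -- abbreviations
  set F : ℕ := Nat.factorial (2000 * n - 1) with hF
  set Z : Fin (2000 * n) := ⟨0, hm⟩ with hZ
  -- the denominator
  have hAll : (Finset.univ.filter (fun π : Equiv.Perm (Fin (2000 * n)) =>
      π Z = Z)).card = F := by
    have hset : (Finset.univ.filter (fun π : Equiv.Perm (Fin (2000 * n)) => π Z = Z))
        = Finset.univ.filter (fun π : Equiv.Perm (Fin (2000 * n)) =>
            ∀ x ∈ ({Z} : Finset (Fin (2000 * n))), π x = id x) := by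
      ext π; simp
    rw [hset, card_perm_extend _ id (Set.injOn_of_injective (fun a b h => h)),
      Finset.card_singleton]
  set k : ℕ := n / 2000 with hk
  have hkn : k ≤ n := Nat.div_le_self _ _
  have h2000k : 2000 * k ≤ n := Nat.mul_div_le n 2000
  set t : ℕ := n - k with ht
  -- the bad event and the union bound
  set hon : Equiv.Perm (Fin (2000 * n)) → Fin n → Prop := fun π i =>
    (π ⟨4 * i.1 + 1, hq i 1 (by omega)⟩ ∈ WA ∧
     π ⟨4 * i.1 + 2, hq i 2 (by omega)⟩ ∈ WA ∧
     π ⟨4 * i.1 + 3, hq i 3 (by omega)⟩ ∈ WAᶜ ∧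
     π ⟨4 * i.1 + 4, hq i 4 (by omega)⟩ ∈ WAᶜ) with hhon
  set Bad : Finset (Equiv.Perm (Fin (2000 * n))) :=
    Finset.univ.filter (fun π : Equiv.Perm (Fin (2000 * n)) =>
      π Z = Z ∧
      ((Finset.univ.filter (fun i : Fin n => hon π i)).card : ℝ) < 1/2000 * n) with hBad
  set E : Finset (Fin n) → Finset (Equiv.Perm (Fin (2000 * n))) := fun S =>
    Finset.univ.filter (fun π : Equiv.Perm (Fin (2000 * n)) =>
      π Z = Z ∧ ∀ i ∈ S, ¬ hon π i) with hE
  have hsub : Bad ⊆ (Finset.univ.powersetCard t).biUnion E := by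
    intro π hπ
    rw [hBad, Finset.mem_filter] at hπ
    obtain ⟨-, hπZ, hcount⟩ := hπ
    have hcnat : (Finset.univ.filter (fun i : Fin n => hon π i)).card ≤ k := by
      have h1 : (2000 * (Finset.univ.filter (fun i : Fin n => hon π i)).card : ℝ) < n := by
        push_cast
        linarith
      have h2 : 2000 * (Finset.univ.filter (fun i : Fin n => hon π i)).card < n := by
        exact_mod_cast h1
      omega
    have hccard : t ≤ (Finset.univ.filter (fun i : Fin n => hon π i))ᶜ.card := by
      rw [Finset.card_compl, Fintype.card_fin]
      have := Finset.card_le_univ (Finset.univ.filter (fun i : Fin n => hon π i))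
      rw [Fintype.card_fin] at this
      omega
    obtain ⟨T, hTsub, hTcard⟩ := Finset.exists_subset_card_eq hccard
    refine Finset.mem_biUnion.mpr ⟨T, ?_, ?_⟩
    · exact Finset.mem_powersetCard.mpr ⟨Finset.subset_univ T, hTcard⟩
    · rw [hE, Finset.mem_filter]
      refine ⟨Finset.mem_univ _, hπZ, ?_⟩
      intro i hiT
      have := hTsub hiT
      rw [Finset.mem_compl, Finset.mem_filter] at this
      exact fun hc => this ⟨Finset.mem_univ _, hc⟩
  -- counting
  have hFpos : (0:ℝ) < F := by
    rw [hF]; exact_mod_cast Nat.factorial_pos _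
  have hET : ∀ T ∈ Finset.univ.powersetCard t, ((E T).card : ℝ) ≤ (99/100:ℝ)^t * F := by
    intro T hT
    have hTcard : T.card = t := (Finset.mem_powersetCard.mp hT).2
    have hEB := E_bound hn1 WA hWA hWB T
    rw [hTcard] at hEB
    have hcast : (100:ℝ)^t * ((E T).card : ℝ) ≤ (99:ℝ)^t * F := by exact_mod_cast hEB
    have h100 : (0:ℝ) < (100:ℝ)^t := by positivity
    rw [div_pow, div_mul_eq_mul_div, le_div_iff₀ h100]
    linarith
  have hBadcard : (Bad.card : ℝ) ≤ (n.choose t : ℝ) * ((99/100:ℝ)^t * F) := by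
    have h1 : Bad.card ≤ ∑ T ∈ Finset.univ.powersetCard t, (E T).card :=
      le_trans (Finset.card_le_card hsub) (Finset.card_biUnion_le)
    have h2 : ∑ T ∈ Finset.univ.powersetCard t, ((E T).card : ℝ)
        ≤ ∑ T ∈ Finset.univ.powersetCard t, ((99/100:ℝ)^t * F) :=
      Finset.sum_le_sum hET
    rw [Finset.sum_const, nsmul_eq_mul, Finset.card_powersetCard, Finset.card_univ,
      Fintype.card_fin] at h2
    calc (Bad.card : ℝ) ≤ ((∑ T ∈ Finset.univ.powersetCard t, (E T).card : ℕ) : ℝ) := by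
          exact_mod_cast h1
      _ = ∑ T ∈ Finset.univ.powersetCard t, ((E T).card : ℝ) := by push_cast; ring
      _ ≤ (n.choose t : ℝ) * ((99/100:ℝ)^t * F) := h2
  -- the analytic estimate
  have hchoose : (n.choose t : ℝ) ≤ 2000^k * (2001/2000:ℝ)^n := by
    rw [ht, Nat.choose_symm hkn]
    have hbinom : ((n.choose k : ℝ)) * (1/2000:ℝ)^k ≤ (1/2000 + 1:ℝ)^n := by
      rw [add_pow]
      calc ((n.choose k : ℝ)) * (1/2000:ℝ)^k
          = (1/2000:ℝ)^k * 1^(n-k) * n.choose k := by rw [one_pow]; ring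
        _ ≤ ∑ j ∈ Finset.range (n+1), (1/2000:ℝ)^j * 1^(n-j) * n.choose j := by
            refine Finset.single_le_sum
              (f := fun j => (1/2000:ℝ)^j * 1^(n-j) * (n.choose j : ℝ))
              (fun j _ => by positivity) ?_
            rw [Finset.mem_range]; omega
    calc (n.choose k : ℝ) = ((n.choose k : ℝ) * (1/2000:ℝ)^k) * 2000^k := by
          rw [mul_assoc, ← mul_pow]; norm_num
      _ ≤ (1/2000 + 1:ℝ)^n * 2000^k :=
          mul_le_mul_of_nonneg_right hbinom (by positivity)
      _ = 2000^k * (2001/2000:ℝ)^n := by rw [mul_comm]; norm_num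
  set L : ℝ := 2000^k * (2001/2000:ℝ)^n * (99/100:ℝ)^t with hL
  have hmain : (n.choose t : ℝ) * (99/100:ℝ)^t ≤ L := by
    rw [hL]
    exact mul_le_mul_of_nonneg_right hchoose (by positivity)
  have hLnonneg : 0 ≤ L := by rw [hL]; positivity
  -- L ≤ 2^{-n/2000}
  set R : ℝ := (2 : ℝ) ^ (-(1/2000 * (n:ℝ))) with hR
  have hRpos : (0:ℝ) < R := Real.rpow_pos_of_pos (by norm_num) _
  have hR2000 : R ^ (2000 : ℕ) = (1/2:ℝ)^n := by
    rw [hR, ← Real.rpow_natCast ((2:ℝ) ^ (-(1/2000 * (n:ℝ)))) 2000,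
      ← Real.rpow_mul (by norm_num)]
    have hexp : (-(1/2000 * (n:ℝ))) * ((2000:ℕ):ℝ) = -(n:ℝ) := by push_cast; ring
    rw [hexp, Real.rpow_neg (by norm_num), Real.rpow_natCast, one_div, inv_pow]
  have key : ((99:ℝ)/100)^(t*2000) = (99/100:ℝ)^(n*2000) * (100/99:ℝ)^(k*2000) := by
    have h2 : ((99:ℝ)/100)^(k*2000) * ((100:ℝ)/99)^(k*2000) = 1 := by
      rw [← mul_pow]; norm_num
    calc ((99:ℝ)/100)^(t*2000)
        = (99/100:ℝ)^(t*2000) * (((99:ℝ)/100)^(k*2000) * ((100:ℝ)/99)^(k*2000)) := by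
          rw [h2, mul_one]
      _ = ((99/100:ℝ)^(t*2000) * ((99:ℝ)/100)^(k*2000)) * ((100:ℝ)/99)^(k*2000) := by
          ring
      _ = (99/100:ℝ)^(n*2000) * (100/99:ℝ)^(k*2000) := by
          rw [← pow_add]
          have hexp : t*2000 + k*2000 = n*2000 := by
            have := hkn
            rw [ht]
            omega
          rw [hexp]
  have e1 : L^(2000:ℕ) = ((198099:ℝ)/200000)^(n*2000) * ((200000:ℝ)/99)^(k*2000) := by
    rw [hL, mul_pow, mul_pow, ← pow_mul, ← pow_mul, ← pow_mul, key]
    have b1 : ((198099:ℝ)/200000) = (2001/2000:ℝ) * (99/100:ℝ) := by norm_num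
    have b2 : ((200000:ℝ)/99) = (2000:ℝ) * (100/99:ℝ) := by norm_num
    rw [b1, b2, mul_pow, mul_pow]
    ring
  have e2 : L^(2000:ℕ) ≤ ((198099:ℝ)/200000)^(n*2000) * ((200000:ℝ)/99)^n := by
    rw [e1]
    refine mul_le_mul_of_nonneg_left ?_ (by positivity)
    refine pow_le_pow_right₀ (by norm_num) ?_
    omega
  have e3 : ((198099:ℝ)/200000)^(n*2000) * ((200000:ℝ)/99)^n
      = (((198099:ℝ)/200000)^2000 * ((200000:ℝ)/99))^n := by
    rw [mul_pow, ← pow_mul, mul_comm 2000 n]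
  have e4 : (((198099:ℝ)/200000)^2000 * ((200000:ℝ)/99))^n ≤ (1/2:ℝ)^n :=
    pow_le_pow_left₀ (by positivity) base_ineq n
  have hLpow : L ^ (2000 : ℕ) ≤ (1/2:ℝ)^n := by
    rw [e3] at e2
    exact e2.trans e4
  have hLR : L ≤ R := by
    have h1 : L ^ (2000:ℕ) ≤ R ^ (2000:ℕ) := by rw [hR2000]; exact hLpow
    exact le_of_pow_le_pow_left₀ (by norm_num) (le_of_lt hRpos) h1
  -- put everything together
  rw [hAll, div_le_iff₀ hFpos]
  calc (Bad.card : ℝ) ≤ (n.choose t : ℝ) * ((99/100:ℝ)^t * F) := hBadcard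
    _ = ((n.choose t : ℝ) * (99/100:ℝ)^t) * F := by ring
    _ ≤ R * F := mul_le_mul_of_nonneg_right (hmain.trans hLR) (le_of_lt hFpos)
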